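/- The relation ≼ on Mockingbird terms is antisymmetric: if t ≼ t' and t' ≼ t then t = t'. Hence ≼ is a partial order on Mockingbird terms. -/
import Mathlib


/-- Mockingbird terms: the constant `M`, variables `x i`, and applications. -/
inductive MTerm : Type
  | M : MTerm
  | var : ℕ → MTerm
  | app : MTerm → MTerm → MTerm
  deriving DecidableEq

/-- The one-step rewrite relation `⇒` on Mockingbird terms. -/
inductive Step : MTerm → MTerm → Prop
  | mock (t : MTerm) : Step (MTerm.app MTerm.M t) (MTerm.app t t)
  | left {t1 t1' : MTerm} (t2 : MTerm) :
      Step t1 t1' → Step (MTerm.app t1 t2) (MTerm.app t1' t2)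
  | right (t1 : MTerm) {t2 t2' : MTerm} :
      Step t2 t2' → Step (MTerm.app t1 t2) (MTerm.app t1 t2')

/-- `≼`, the reflexive-transitive closure of `⇒`. -/
def MLe : MTerm → MTerm → Prop := Relation.ReflTransGen Step

/-- `≡`, the reflexive-symmetric-transitive closure of `⇒`. -/
def MEquiv : MTerm → MTerm → Prop := Relation.EqvGen Step

/-- Strict version of `≼`. -/
def MLt (s t : MTerm) : Prop := MLe s t ∧ s ≠ t

/-- Covering relation for `≼`. -/
def MCovBy (s t : MTerm) : Prop := MLt s t ∧ ∀ z, MLt s z → ¬ MLt z t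

/-- Duplicative trees: white or black nodes with a list (forest) of children. -/
inductive DTree : Type
  | W : List DTree → DTree
  | B : List DTree → DTree

/-- The one-step relation `⋖` on duplicative forests. -/
inductive DStep : List DTree → List DTree → Prop
  | dup (g : List DTree) : DStep [DTree.W g] [DTree.B (g ++ g)]
  | white {g g' : List DTree} : DStep g g' → DStep [DTree.W g] [DTree.W g']
  | black {g g' : List DTree} : DStep g g' → DStep [DTree.B g] [DTree.B g']
  | head {t t' : DTree} (f : List DTree) : DStep [t] [t'] → DStep (t :: f) (t' :: f)
  | tail (t : DTree) {f f' : List DTree} : DStep f f' → DStep (t :: f) (t :: f')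

/-- `≪`, the reflexive-transitive closure of `⋖`. -/
def DLe : List DTree → List DTree → Prop := Relation.ReflTransGen DStep

/-- The map `fr` from Mockingbird terms to duplicative forests. -/
def fr : MTerm → List DTree
  | MTerm.M => []
  | MTerm.var _ => []
  | MTerm.app MTerm.M MTerm.M => [DTree.B []]
  | MTerm.app MTerm.M t' => [DTree.W (fr t')]
  | MTerm.app t t' => [DTree.B (fr t ++ fr t')]

mutual
  /-- The pruning map on duplicative trees (returns a forest). -/
  def prT : DTree → List DTree
    | DTree.W g => [DTree.W (prF g)]
    | DTree.B g => prF g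
  /-- The pruning map on duplicative forests. -/
  def prF : List DTree → List DTree
    | [] => []
    | t :: f => prT t ++ prF f
end

mutual
  /-- The statistic `mtStat` on duplicative trees. -/
  def mtStat : DTree → ℕ
    | DTree.W g => 2 * ml g
    | DTree.B g => ml g
  /-- Sum of `mtStat` over the trees of a forest. -/
  def mtsum : List DTree → ℕ
    | [] => 0
    | t :: f => mtStat t + mtsum f
  /-- The statistic `ml` on duplicative forests: `1 - ℓ + Σ mtStat`. -/
  def ml : List DTree → ℕ
    | f => mtsum f + 1 - f.length
end

mutual
  /-- Number of white nodes in a duplicative tree. -/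
  def whitesT : DTree → ℕ
    | DTree.W g => 1 + whitesF g
    | DTree.B g => whitesF g
  /-- Number of white nodes in a duplicative forest. -/
  def whitesF : List DTree → ℕ
    | [] => 0
    | t :: f => whitesT t + whitesF f
end

/-- Closed terms: no variables. -/
def MClosed : MTerm → Prop
  | MTerm.M => True
  | MTerm.var _ => False
  | MTerm.app a b => MClosed a ∧ MClosed b

/-- Degree: number of applications. -/
def deg : MTerm → ℕ
  | MTerm.M => 0
  | MTerm.var _ => 0
  | MTerm.app a b => deg a + deg b + 1

/-- Subterm relation. -/
inductive Subterm : MTerm → MTerm → Prop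
  | refl (t : MTerm) : Subterm t t
  | left {s a : MTerm} (b : MTerm) : Subterm s a → Subterm s (MTerm.app a b)
  | right (a : MTerm) {s b : MTerm} : Subterm s b → Subterm s (MTerm.app a b)

/-- The term `r_d`. -/
def rTerm : ℕ → MTerm
  | 0 => MTerm.M
  | d + 1 => MTerm.app MTerm.M (rTerm d)

/-- Saturated chain from `a` to `b`, given as the list of its elements. -/
def SatChain (a b : MTerm) (c : List MTerm) : Prop :=
  List.Chain' MCovBy c ∧ c.head? = some a ∧ c.getLast? = some b

/-- Multiplicative weight used to prove antisymmetry. -/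
def wgt : MTerm → ℕ
  | MTerm.M => 2
  | MTerm.var _ => 3
  | MTerm.app a b => wgt a * wgt b

lemma two_le_wgt (t : MTerm) : 2 ≤ wgt t := by
  induction t with
  | M => simp [wgt]
  | var i => simp [wgt]
  | app a b iha ihb =>
      have : 2 * 2 ≤ wgt a * wgt b := Nat.mul_le_mul iha ihb
      simp only [wgt]; omega

lemma wgt_eq_two (t : MTerm) (h : wgt t = 2) : t = MTerm.M := by
  cases t with
  | M => rfl
  | var i => simp [wgt] at h
  | app a b =>
      have := Nat.mul_le_mul (two_le_wgt a) (two_le_wgt b)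
      simp only [wgt] at h; omega

lemma step_wgt {t u : MTerm} (h : Step t u) :
    wgt t ≤ wgt u ∧ (wgt t = wgt u → t = u) := by
  induction h with
  | mock t =>
      have h2 := two_le_wgt t
      constructor
      · simp only [wgt]
        exact Nat.mul_le_mul_right _ h2
      · intro he
        simp only [wgt] at he
        have hpos : 0 < wgt t := by omega
        have : 2 = wgt t := Nat.eq_of_mul_eq_mul_right hpos he
        rw [wgt_eq_two t this.symm]
  | left t2 h ih =>
      rcases ih with ⟨hle, heq⟩
      have hpos : 0 < wgt t2 := by have := two_le_wgt t2; omega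
      constructor
      · exact Nat.mul_le_mul_right _ hle
      · intro he
        simp only [wgt] at he
        rw [heq (Nat.eq_of_mul_eq_mul_right hpos he)]
  | right t1 h ih =>
      rcases ih with ⟨hle, heq⟩
      have hpos : 0 < wgt t1 := by have := two_le_wgt t1; omega
      constructor
      · exact Nat.mul_le_mul_left _ hle
      · intro he
        simp only [wgt] at he
        rw [heq (Nat.eq_of_mul_eq_mul_left hpos he)]

lemma mle_wgt {t u : MTerm} (h : MLe t u) : wgt t ≤ wgt u := by
  induction h with
  | refl => exact le_refl _
  | tail _ hs ih => exact le_trans ih (step_wgt hs).1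

lemma mle_wgt_eq {t u : MTerm} (h : MLe t u) (he : wgt t = wgt u) : t = u := by
  induction h using Relation.ReflTransGen.head_induction_on with
  | refl => rfl
  | head hs hrest ih =>
      rename_i a c
      have h1 := step_wgt hs
      have h2 := mle_wgt hrest
      have : wgt a = wgt c := by omega
      rw [h1.2 this]
      exact ih (by omega)

/-- the relation `≼` on Mockingbird terms is antisymmetric. -/
theorem mockingbird_le_antisymm :
    ∀ t t' : MTerm, MLe t t' → MLe t' t → t = t' := by
  intro t t' h h'
  exact mle_wgt_eq h (le_antisymm (mle_wgt h) (mle_wgt h'))
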